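/- Let Π be a profinite group, ℓ a prime, T a finitely generated free ℤ_ℓ-module with a continuous Π-action, V = T ⊗ ℚ_ℓ, and M = T ⊗ ℚ_ℓ/ℤ_ℓ. Suppose that for every open subgroup U ⊆ Π one has V^U = V^Π (e.g. because the Zariski closure of the image of Π in GL(V) is connected). Then for every open subgroup U ⊆ Π, the index [M^U : M^Π] is finite. -/

import Mathlib

open scoped Classical

/-- The additive subgroup `{v ∈ V | ∀ g ∈ U, ρ g v - v ∈ T}` of `V = ℚ_ℓ^r`, whose image in
`M = V/T` is exactly `M^U` (`T` being the unit-ball lattice). -/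
noncomputable def latticeInvariants (ℓ r : ℕ) [Fact ℓ.Prime]
    (Γ : Type*) [Group Γ] (ρ : Representation ℚ_[ℓ] Γ (Fin r → ℚ_[ℓ]))
    (U : Subgroup Γ) : AddSubgroup (Fin r → ℚ_[ℓ]) where
  carrier := {v | ∀ g ∈ U, ∀ i, ‖(ρ g v - v) i‖ ≤ 1}
  zero_mem' := by intro g hg i; simp
  add_mem' := by
    intro a b ha hb g hg i
    have h : (ρ g (a + b) - (a + b)) i = (ρ g a - a) i + (ρ g b - b) i := by
      simp [map_add]; ring
    rw [h]
    exact le_trans (Padic.nonarchimedean _ _) (max_le (ha g hg i) (hb g hg i))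
  neg_mem' := by
    intro a ha g hg i
    have h : (ρ g (-a) - (-a)) i = -((ρ g a - a) i) := by simp [map_neg]; ring
    rw [h, norm_neg]
    exact ha g hg i

set_option linter.unusedSectionVars false

namespace FiniteIndexAux

variable {ℓ r : ℕ} [Fact ℓ.Prime] {Γ : Type*} [Group Γ] [TopologicalSpace Γ]
  (ρ : Representation ℚ_[ℓ] Γ (Fin r → ℚ_[ℓ])) (U : Subgroup Γ)

lemma mem_lat {v : Fin r → ℚ_[ℓ]} :
    v ∈ latticeInvariants ℓ r Γ ρ U ↔ ∀ g ∈ U, ∀ i, ‖(ρ g v - v) i‖ ≤ 1 :=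
  Iff.rfl

lemma sub_norm_le {x y : ℚ_[ℓ]} (hx : ‖x‖ ≤ 1) (hy : ‖y‖ ≤ 1) : ‖x - y‖ ≤ 1 := by
  rw [sub_eq_add_neg]
  exact le_trans (Padic.nonarchimedean _ _) (max_le hx (by rwa [norm_neg]))

lemma smul_mem_lat {a : ℚ_[ℓ]} (ha : ‖a‖ ≤ 1) {x : Fin r → ℚ_[ℓ]}
    (hx : x ∈ latticeInvariants ℓ r Γ ρ U) : a • x ∈ latticeInvariants ℓ r Γ ρ U := by
  rw [mem_lat] at hx ⊢
  intro g hg i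
  have h : (ρ g (a • x) - a • x) i = a * ((ρ g x - x) i) := by
    rw [map_smul]
    simp only [Pi.sub_apply, Pi.smul_apply, smul_eq_mul]
    ring
  rw [h, norm_mul]
  calc ‖a‖ * ‖(ρ g x - x) i‖ ≤ 1 * 1 :=
        mul_le_mul ha (hx g hg i) (norm_nonneg _) zero_le_one
    _ = 1 := mul_one 1

lemma ball_mem_lat (hlat : ∀ (g : Γ) (x : Fin r → ℚ_[ℓ]), (∀ i, ‖x i‖ ≤ 1) → ∀ i, ‖ρ g x i‖ ≤ 1)
    {t : Fin r → ℚ_[ℓ]} (ht : ∀ i, ‖t i‖ ≤ 1) : t ∈ latticeInvariants ℓ r Γ ρ U := by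
  rw [mem_lat]
  intro g hg i
  exact sub_norm_le (hlat g t ht i) (ht i)

lemma isClosed_lat (hcont : Continuous fun p : Γ × (Fin r → ℚ_[ℓ]) => ρ p.1 p.2) :
    IsClosed ((latticeInvariants ℓ r Γ ρ U : Set (Fin r → ℚ_[ℓ]))) := by
  have hg : ∀ g : Γ, Continuous fun v : Fin r → ℚ_[ℓ] => ρ g v := fun g =>
    hcont.comp (continuous_const.prodMk continuous_id)
  have : (latticeInvariants ℓ r Γ ρ U : Set (Fin r → ℚ_[ℓ])) =
      ⋂ (g : Γ) (_ : g ∈ U), ⋂ i, {v | ‖(ρ g v - v) i‖ ≤ 1} := by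
    ext v
    simp only [SetLike.mem_coe, mem_lat, Set.mem_iInter, Set.mem_setOf_eq]
  rw [this]
  refine isClosed_iInter fun g => isClosed_iInter fun _ => isClosed_iInter fun i => ?_
  exact isClosed_le (((continuous_apply i).comp ((hg g).sub continuous_id)).norm)
    continuous_const

/-- Approximate a unit-ball element of `ℚ_[ℓ]` mod `ℓ^m` by a natural number `< ℓ^m`. -/
lemma approx (m : ℕ) (z : ℚ_[ℓ]) (hz : ‖z‖ ≤ 1) :
    ∃ a : ℕ, a < ℓ ^ m ∧ ‖z - (a : ℚ_[ℓ])‖ ≤ ((ℓ : ℝ) ^ m)⁻¹ := by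
  have hℓ : ℓ.Prime := Fact.out
  have hℓR : (0 : ℝ) < (ℓ : ℝ) ^ m := pow_pos (by exact_mod_cast hℓ.pos) m
  set x : ℤ_[ℓ] := ⟨z, hz⟩ with hx
  obtain ⟨a₀, ha₀⟩ := PadicInt.denseRange_natCast.exists_dist_lt x (inv_pos.mpr hℓR)
  have h1 : ‖z - (a₀ : ℚ_[ℓ])‖ ≤ ((ℓ : ℝ) ^ m)⁻¹ := by
    have : dist x ((a₀ : ℕ) : ℤ_[ℓ]) = ‖z - (a₀ : ℚ_[ℓ])‖ := by
      rw [dist_eq_norm, PadicInt.norm_def]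
      push_cast
      rfl
    linarith [ha₀, this.symm.le]
  refine ⟨a₀ % ℓ ^ m, Nat.mod_lt _ (pow_pos hℓ.pos m), ?_⟩
  have h2 : ‖((a₀ : ℚ_[ℓ]) - ((a₀ % ℓ ^ m : ℕ) : ℚ_[ℓ]))‖ ≤ ((ℓ : ℝ) ^ m)⁻¹ := by
    have hsplit : (a₀ : ℚ_[ℓ]) - ((a₀ % ℓ ^ m : ℕ) : ℚ_[ℓ]) =
        ((ℓ : ℚ_[ℓ]) ^ m) * ((a₀ / ℓ ^ m : ℕ) : ℚ_[ℓ]) := by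
      have hnat : ℓ ^ m * (a₀ / ℓ ^ m) + a₀ % ℓ ^ m = a₀ := Nat.div_add_mod a₀ (ℓ ^ m)
      have hcast : ((ℓ : ℚ_[ℓ]) ^ m) * ((a₀ / ℓ ^ m : ℕ) : ℚ_[ℓ]) +
          ((a₀ % ℓ ^ m : ℕ) : ℚ_[ℓ]) = (a₀ : ℚ_[ℓ]) := by
        exact_mod_cast congrArg (Nat.cast : ℕ → ℚ_[ℓ]) hnat
      rw [← hcast]
      ring
    rw [hsplit, norm_mul]
    have hp : ‖(ℓ : ℚ_[ℓ]) ^ m‖ = ((ℓ : ℝ) ^ m)⁻¹ := by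
      rw [norm_pow, Padic.norm_p, inv_pow]
    rw [hp]
    have : ‖((a₀ / ℓ ^ m : ℕ) : ℚ_[ℓ])‖ ≤ 1 := by
      have h := Padic.norm_int_le_one (p := ℓ) ((a₀ / ℓ ^ m : ℕ) : ℤ)
      rwa [Int.cast_natCast] at h
    calc ((ℓ : ℝ) ^ m)⁻¹ * ‖((a₀ / ℓ ^ m : ℕ) : ℚ_[ℓ])‖ ≤ ((ℓ : ℝ) ^ m)⁻¹ * 1 := by
          exact mul_le_mul_of_nonneg_left this (by positivity)
      _ = ((ℓ : ℝ) ^ m)⁻¹ := mul_one _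
  have h3 : z - ((a₀ % ℓ ^ m : ℕ) : ℚ_[ℓ]) =
      (z - (a₀ : ℚ_[ℓ])) + ((a₀ : ℚ_[ℓ]) - ((a₀ % ℓ ^ m : ℕ) : ℚ_[ℓ])) := by ring
  rw [h3]
  exact le_trans (Padic.nonarchimedean _ _) (max_le h1 h2)

end FiniteIndexAux

open FiniteIndexAux in
theorem finite_index_of_connected_invariants
    (ℓ r : ℕ) [Fact ℓ.Prime]
    (Γ : Type*) [Group Γ] [TopologicalSpace Γ] [IsTopologicalGroup Γ]
    [CompactSpace Γ] [TotallyDisconnectedSpace Γ]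
    (ρ : Representation ℚ_[ℓ] Γ (Fin r → ℚ_[ℓ]))
    (hcont : Continuous fun p : Γ × (Fin r → ℚ_[ℓ]) => ρ p.1 p.2)
    (hlat : ∀ (g : Γ) (x : Fin r → ℚ_[ℓ]), (∀ i, ‖x i‖ ≤ 1) → ∀ i, ‖ρ g x i‖ ≤ 1)
    (hV : ∀ U : Subgroup Γ, IsOpen (U : Set Γ) →
      ∀ v : Fin r → ℚ_[ℓ], (∀ g ∈ U, ρ g v = v) → ∀ g : Γ, ρ g v = v) :
    ∀ U : Subgroup Γ, IsOpen (U : Set Γ) →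
      ((latticeInvariants ℓ r Γ ρ ⊤).addSubgroupOf (latticeInvariants ℓ r Γ ρ U)).index ≠ 0 := by
  intro U hU
  have hℓ : ℓ.Prime := Fact.out
  have hℓ1R : (1 : ℝ) < (ℓ : ℝ) := by exact_mod_cast hℓ.one_lt
  have hℓ0 : ((ℓ : ℚ_[ℓ])) ≠ 0 := by
    exact_mod_cast Nat.cast_ne_zero.mpr hℓ.ne_zero
  -- the subspace of full invariants
  set W : Submodule ℚ_[ℓ] (Fin r → ℚ_[ℓ]) :=
    { carrier := {v | ∀ g : Γ, ρ g v = v}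
      add_mem' := fun ha hb g => by rw [map_add, ha g, hb g]
      zero_mem' := fun g => map_zero _
      smul_mem' := fun c x hx g => by rw [map_smul, hx g] } with hWdef
  have memW : ∀ v : Fin r → ℚ_[ℓ], v ∈ W ↔ ∀ g : Γ, ρ g v = v := fun v => Iff.rfl
  -- W is contained in every latticeInvariants
  have hWsub : ∀ (U' : Subgroup Γ) (w : Fin r → ℚ_[ℓ]), w ∈ W →
      w ∈ latticeInvariants ℓ r Γ ρ U' := by
    intro U' w hw
    rw [mem_lat]
    intro g hg i
    rw [(memW w).mp hw g]
    simp
  obtain ⟨W', hWW'⟩ := W.exists_isCompl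
  have hW'closed : IsClosed (W' : Set (Fin r → ℚ_[ℓ])) :=
    W'.closed_of_finiteDimensional
  have hLclosed : IsClosed ((latticeInvariants ℓ r Γ ρ U : Set (Fin r → ℚ_[ℓ]))) :=
    isClosed_lat ρ U hcont
  have hnormpinv : ∀ m : ℕ, ‖((ℓ : ℚ_[ℓ]) ^ m)⁻¹‖ = (ℓ : ℝ) ^ m := by
    intro m
    rw [norm_inv, norm_pow, Padic.norm_p, inv_pow, inv_inv]
  -- Key boundedness claim
  have hbdd : ∃ m : ℕ, ∀ v ∈ latticeInvariants ℓ r Γ ρ U, v ∈ W' →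
      ∀ i, ‖v i‖ ≤ (ℓ : ℝ) ^ m := by
    by_contra hcon
    push_neg at hcon
    set K : ℕ → Set (Fin r → ℚ_[ℓ]) := fun m =>
      {y | (∀ i, ‖y i‖ ≤ 1) ∧ (∃ i, 1 ≤ ‖y i‖) ∧ y ∈ W' ∧
        ((ℓ : ℚ_[ℓ]) ^ m)⁻¹ • y ∈ latticeInvariants ℓ r Γ ρ U} with hKdef
    have hKclosed : ∀ m, IsClosed (K m) := by
      intro m
      have h1 : IsClosed {y : Fin r → ℚ_[ℓ] | ∀ i, ‖y i‖ ≤ 1} := by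
        have : {y : Fin r → ℚ_[ℓ] | ∀ i, ‖y i‖ ≤ 1} = ⋂ i, {y | ‖y i‖ ≤ 1} := by
          ext y; simp
        rw [this]
        exact isClosed_iInter fun i => isClosed_le (continuous_apply i).norm continuous_const
      have h2 : IsClosed {y : Fin r → ℚ_[ℓ] | ∃ i, 1 ≤ ‖y i‖} := by
        have : {y : Fin r → ℚ_[ℓ] | ∃ i, 1 ≤ ‖y i‖} = ⋃ i, {y | 1 ≤ ‖y i‖} := by
          ext y; simp
        rw [this]
        exact isClosed_iUnion_of_finite fun i =>
          isClosed_le continuous_const (continuous_apply i).norm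
      have h4 : IsClosed {y : Fin r → ℚ_[ℓ] |
          ((ℓ : ℚ_[ℓ]) ^ m)⁻¹ • y ∈ latticeInvariants ℓ r Γ ρ U} :=
        hLclosed.preimage (continuous_const_smul _)
      have hKeq : K m = ({y : Fin r → ℚ_[ℓ] | ∀ i, ‖y i‖ ≤ 1} ∩
          {y | ∃ i, 1 ≤ ‖y i‖} ∩ (W' : Set (Fin r → ℚ_[ℓ])) ∩
          {y | ((ℓ : ℚ_[ℓ]) ^ m)⁻¹ • y ∈ latticeInvariants ℓ r Γ ρ U}) := by
        ext y
        simp only [hKdef, Set.mem_inter_iff, Set.mem_setOf_eq, SetLike.mem_coe]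
        tauto
      rw [hKeq]
      exact ((h1.inter h2).inter hW'closed).inter h4
    have hKmono : ∀ m, K (m + 1) ⊆ K m := by
      intro m y hy
      obtain ⟨hy1, hy2, hy3, hy4⟩ := hy
      refine ⟨hy1, hy2, hy3, ?_⟩
      have heq : ((ℓ : ℚ_[ℓ]) ^ m)⁻¹ • y = (ℓ : ℚ_[ℓ]) • (((ℓ : ℚ_[ℓ]) ^ (m + 1))⁻¹ • y) := by
        rw [smul_smul]
        congr 1
        field_simp
        ring
      rw [heq]
      refine smul_mem_lat ρ U ?_ hy4
      rw [Padic.norm_p]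
      exact inv_le_one_of_one_le₀ hℓ1R.le
    have hKnonempty : ∀ m, (K m).Nonempty := by
      intro m
      obtain ⟨v, hvL, hvW', i₁, hi₁⟩ := hcon (m + 1)
      have : Nonempty (Fin r) := ⟨i₁⟩
      obtain ⟨i₀, -, hi₀⟩ := Finset.exists_max_image Finset.univ (fun i => ‖v i‖)
        Finset.univ_nonempty
      have hle : ∀ i, ‖v i‖ ≤ ‖v i₀‖ := fun i => hi₀ i (Finset.mem_univ i)
      have hbig : (ℓ : ℝ) ^ (m + 1) < ‖v i₀‖ := lt_of_lt_of_le hi₁ (hle i₁)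
      have hpos : 0 < ‖v i₀‖ := lt_trans (by positivity) hbig
      have hne : v i₀ ≠ 0 := by
        intro h
        rw [h, norm_zero] at hpos
        exact lt_irrefl 0 hpos
      refine ⟨(v i₀)⁻¹ • v, ?_, ⟨i₀, ?_⟩, W'.smul_mem _ hvW', ?_⟩
      · intro i
        simp only [Pi.smul_apply, smul_eq_mul, norm_mul, norm_inv]
        rw [← div_eq_inv_mul]
        exact div_le_one_of_le₀ (hle i) hpos.le
      · simp only [Pi.smul_apply, smul_eq_mul, norm_mul, norm_inv]
        rw [inv_mul_cancel₀ (norm_ne_zero_iff.mpr hne)]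
      · rw [smul_smul]
        refine smul_mem_lat ρ U ?_ hvL
        rw [norm_mul, hnormpinv, norm_inv]
        rw [← div_eq_mul_inv]
        rw [div_le_one hpos]
        calc (ℓ : ℝ) ^ m ≤ (ℓ : ℝ) ^ (m + 1) :=
              pow_le_pow_right₀ hℓ1R.le (Nat.le_succ m)
          _ ≤ ‖v i₀‖ := hbig.le
    have hK0compact : IsCompact (K 0) := by
      have hball : IsCompact {y : Fin r → ℚ_[ℓ] | ∀ i, ‖y i‖ ≤ 1} := by
        have : {y : Fin r → ℚ_[ℓ] | ∀ i, ‖y i‖ ≤ 1} =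
            Set.univ.pi (fun _ : Fin r => Metric.closedBall (0 : ℚ_[ℓ]) 1) := by
          ext y
          simp [Set.mem_pi, Metric.mem_closedBall, dist_zero_right]
        rw [this]
        exact isCompact_univ_pi fun i => isCompact_closedBall _ _
      exact hball.of_isClosed_subset (hKclosed 0) fun y hy => hy.1
    obtain ⟨y, hy⟩ := IsCompact.nonempty_iInter_of_sequence_nonempty_isCompact_isClosed
      K hKmono hKnonempty hK0compact hKclosed
    simp only [Set.mem_iInter] at hy
    have hyfix : ∀ g ∈ U, ρ g y = y := by
      intro g hg
      have hcoord : ∀ i, (ρ g y - y) i = 0 := by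
        intro i
        have hnle : ∀ m : ℕ, ‖(ρ g y - y) i‖ ≤ ((ℓ : ℝ)⁻¹) ^ m := by
          intro m
          have hmem := (hy m).2.2.2
          rw [mem_lat] at hmem
          have := hmem g hg i
          have heq : (ρ g (((ℓ : ℚ_[ℓ]) ^ m)⁻¹ • y) - ((ℓ : ℚ_[ℓ]) ^ m)⁻¹ • y) i =
              ((ℓ : ℚ_[ℓ]) ^ m)⁻¹ * ((ρ g y - y) i) := by
            rw [map_smul]
            simp only [Pi.sub_apply, Pi.smul_apply, smul_eq_mul]
            ring
          rw [heq, norm_mul, hnormpinv] at this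
          rw [inv_pow]
          calc ‖(ρ g y - y) i‖ = ((ℓ : ℝ) ^ m)⁻¹ * ((ℓ : ℝ) ^ m * ‖(ρ g y - y) i‖) := by
                field_simp
            _ ≤ ((ℓ : ℝ) ^ m)⁻¹ * 1 := by
                exact mul_le_mul_of_nonneg_left this (by positivity)
            _ = ((ℓ : ℝ) ^ m)⁻¹ := mul_one _
        by_contra hne
        have hpos : 0 < ‖(ρ g y - y) i‖ := norm_pos_iff.mpr hne
        obtain ⟨m, hm⟩ := exists_pow_lt_of_lt_one hpos
          (inv_lt_one_of_one_lt₀ hℓ1R)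
        exact absurd (hnle m) (not_le.mpr hm)
      have : ρ g y - y = 0 := funext fun i => hcoord i
      exact sub_eq_zero.mp this
    have hyW : y ∈ W := (memW y).mpr (hV U hU y hyfix)
    have hyW' : y ∈ W' := (hy 0).2.2.1
    have hy0 : y = 0 := by
      have := hWW'.disjoint
      rw [Submodule.disjoint_def] at this
      exact this y hyW hyW'
    obtain ⟨i, hi⟩ := (hy 0).2.1
    rw [hy0] at hi
    simp at hi
    linarith
  -- now use boundedness to build a surjection from a finite type
  obtain ⟨m, hm⟩ := hbdd
  set Lu := latticeInvariants ℓ r Γ ρ U with hLu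
  set Lt := latticeInvariants ℓ r Γ ρ (⊤ : Subgroup Γ) with hLt
  -- candidate representatives
  set pt : (Fin r → Fin (ℓ ^ m)) → (Fin r → ℚ_[ℓ]) :=
    fun b i => (((b i : ℕ) : ℚ_[ℓ])) * ((ℓ : ℚ_[ℓ]) ^ m)⁻¹ with hpt
  set f : (Fin r → Fin (ℓ ^ m)) → (↥Lu ⧸ Lt.addSubgroupOf Lu) :=
    fun b => if h : pt b ∈ Lu then QuotientAddGroup.mk (⟨pt b, h⟩ : ↥Lu) else 0 with hf
  have hsurj : Function.Surjective f := by
    intro q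
    obtain ⟨x, rfl⟩ := QuotientAddGroup.mk_surjective q
    -- decompose x = w + v' with w ∈ W, v' ∈ W'
    have hxtop : (x : Fin r → ℚ_[ℓ]) ∈ W ⊔ W' := by
      rw [hWW'.sup_eq_top]
      exact Submodule.mem_top
    obtain ⟨w, hw, v', hv', hxv⟩ := Submodule.mem_sup.mp hxtop
    have hv'Lu : v' ∈ Lu := by
      have : v' = (x : Fin r → ℚ_[ℓ]) - w := by rw [← hxv]; ring
      rw [this]
      exact AddSubgroup.sub_mem _ x.2 (hWsub U w hw)
    have hv'bd : ∀ i, ‖v' i‖ ≤ (ℓ : ℝ) ^ m := hm v' hv'Lu hv'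
    -- approximate each coordinate
    have happrox : ∀ i, ∃ a : ℕ, a < ℓ ^ m ∧
        ‖(ℓ : ℚ_[ℓ]) ^ m * v' i - (a : ℚ_[ℓ])‖ ≤ ((ℓ : ℝ) ^ m)⁻¹ := by
      intro i
      refine approx m ((ℓ : ℚ_[ℓ]) ^ m * v' i) ?_
      rw [norm_mul, norm_pow, Padic.norm_p, inv_pow]
      calc ((ℓ : ℝ) ^ m)⁻¹ * ‖v' i‖ ≤ ((ℓ : ℝ) ^ m)⁻¹ * (ℓ : ℝ) ^ m := by
            refine mul_le_mul_of_nonneg_left (hv'bd i) (by positivity)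
        _ = 1 := by
            field_simp
    choose a ha1 ha2 using happrox
    set b : Fin r → Fin (ℓ ^ m) := fun i => ⟨a i, ha1 i⟩ with hb
    -- pt b - v' is in the unit ball T
    have hdiff : ∀ i, ‖(pt b - v') i‖ ≤ 1 := by
      intro i
      have heq : (pt b - v') i =
          ((a i : ℚ_[ℓ]) - (ℓ : ℚ_[ℓ]) ^ m * v' i) * ((ℓ : ℚ_[ℓ]) ^ m)⁻¹ := by
        simp only [Pi.sub_apply, hpt, hb]
        field_simp
      rw [heq, norm_mul, hnormpinv]
      have : ‖(a i : ℚ_[ℓ]) - (ℓ : ℚ_[ℓ]) ^ m * v' i‖ ≤ ((ℓ : ℝ) ^ m)⁻¹ := by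
        rw [← norm_neg]
        simpa [neg_sub] using ha2 i
      calc ‖(a i : ℚ_[ℓ]) - (ℓ : ℚ_[ℓ]) ^ m * v' i‖ * (ℓ : ℝ) ^ m
            ≤ ((ℓ : ℝ) ^ m)⁻¹ * (ℓ : ℝ) ^ m := by
            exact mul_le_mul_of_nonneg_right this (by positivity)
        _ = 1 := by field_simp
    have hptLu : pt b ∈ Lu := by
      have : pt b = v' + (pt b - v') := by ring
      rw [this]
      exact AddSubgroup.add_mem _ hv'Lu (ball_mem_lat ρ U hlat hdiff)
    refine ⟨b, ?_⟩
    rw [hf]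
    simp only [hptLu, dif_pos]
    rw [QuotientAddGroup.eq]
    rw [AddSubgroup.mem_addSubgroupOf]
    have hcalc : ((-(⟨pt b, hptLu⟩ : ↥Lu) + x : ↥Lu) : Fin r → ℚ_[ℓ]) =
        w + (v' - pt b) := by
      push_cast
      rw [← hxv]
      ring
    rw [hcalc]
    refine AddSubgroup.add_mem _ (hWsub ⊤ w hw) ?_
    refine ball_mem_lat ρ ⊤ hlat fun i => ?_
    rw [← norm_neg]
    simpa [neg_sub] using hdiff i
  have : Finite (↥Lu ⧸ Lt.addSubgroupOf Lu) := Finite.of_surjective f hsurj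
  exact AddSubgroup.index_ne_zero_of_finite
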